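/- Let n = 2m be even and let q be an integer with 0 ≤ q ≤ m. For every c ∈ B(n,q), Γ_q^{(A)}(c) = {i ∈ {0,…,n} : R(c)_i ≠ R(c)_j for all j < i}, where R(c) is the running sum of c. -/

import Mathlib

/-- The Hamming weight of a binary word `x ∈ {0,1}^N`: the number of ones. -/
def wt {N : ℕ} (x : Fin N → Bool) : ℕ :=
  (Finset.univ.filter (fun i => x i = true)).card

/-- `Flip x j` complements the first `j` bits of `x`. -/
def Flip {N : ℕ} (x : Fin N → Bool) (j : ℕ) : Fin N → Bool :=
  fun i => if (i : ℕ) < j then !(x i) else x i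

/-- The running sum `R(x)`: `R(x)₀ = 0` and `R(x)ᵢ = R(x)_{i−1} ± 1`
according to whether the `i`-th bit is `1` or `0`. -/
def RS {N : ℕ} (x : Fin N → Bool) : ℕ → ℤ
  | 0 => 0
  | i + 1 => RS x i + if h : i < N then (if x ⟨i, h⟩ then 1 else -1) else 0

lemma wt_int {N : ℕ} (x : Fin N → Bool) :
    (wt x : ℤ) = ∑ i : Fin N, (if x i then (1:ℤ) else 0) := by
  unfold wt
  rw [Finset.card_filter]
  push_cast
  simp

lemma flip_flip' {N : ℕ} (c : Fin N → Bool) (i : ℕ) : Flip (Flip c i) i = c := by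
  funext k
  simp only [Flip]
  split <;> simp

lemma wt_flip_int {N : ℕ} (x : Fin N → Bool) (j : ℕ) :
    (wt (Flip x j) : ℤ) = (wt x : ℤ) - RS x j := by
  induction j with
  | zero =>
      have : Flip x 0 = x := by funext k; simp [Flip]
      simp [this, RS]
  | succ j ih =>
      by_cases h : j < N
      · have hupd : Flip x (j+1) = Function.update (Flip x j) ⟨j, h⟩ (!(x ⟨j, h⟩)) := by
          funext k
          rcases eq_or_ne k (⟨j, h⟩ : Fin N) with rfl | hk
          · simp [Flip]
          · rw [Function.update_of_ne hk]
            have hk' : (k : ℕ) ≠ j := fun hc => hk (Fin.ext hc)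
            simp only [Flip]
            exact if_congr (by omega) rfl rfl
        have hsum : (fun i => (if (Function.update (Flip x j) ⟨j, h⟩ (!(x ⟨j, h⟩))) i then (1:ℤ) else 0))
            = Function.update (fun i => if (Flip x j) i then (1:ℤ) else 0) ⟨j, h⟩
              (if !(x ⟨j, h⟩) then (1:ℤ) else 0) := by
          funext k
          rcases eq_or_ne k (⟨j, h⟩ : Fin N) with rfl | hk
          · simp
          · rw [Function.update_of_ne hk, Function.update_of_ne hk]
        have hflipj : (Flip x j) ⟨j, h⟩ = x ⟨j, h⟩ := by simp [Flip]
        rw [wt_int, hupd, hsum, Finset.sum_update_of_mem (Finset.mem_univ _)]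
        have := wt_int (Flip x j)
        rw [Finset.sum_eq_add_sum_sdiff_singleton_of_mem (Finset.mem_univ (⟨j, h⟩ : Fin N))] at this
        rw [hflipj] at this
        have hRS : RS x (j+1) = RS x j + (if x ⟨j, h⟩ then (1:ℤ) else -1) := by
          simp [RS, h]
        rw [hRS]
        have : (∑ i ∈ Finset.univ \ {(⟨j, h⟩ : Fin N)}, (if (Flip x j) i then (1:ℤ) else 0))
            = (wt (Flip x j) : ℤ) - (if x ⟨j, h⟩ then (1:ℤ) else 0) := by linarith
        rw [this, ih]
        cases hx : x ⟨j, h⟩ <;> simp <;> ring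
      · have hflip : Flip x (j+1) = Flip x j := by
          funext k
          have hk : (k : ℕ) < N := k.isLt
          simp only [Flip]
          exact if_congr (by omega) rfl rfl
        have hRS : RS x (j+1) = RS x j := by simp [RS, h]
        rw [hflip, hRS, ih]

lemma RS_flip_le {N : ℕ} (c : Fin N → Bool) (i j : ℕ) (h : j ≤ i) :
    RS (Flip c i) j = -RS c j := by
  induction j with
  | zero => simp [RS]
  | succ j ih =>
      have hji : j < i := by omega
      have ih' := ih (by omega)
      by_cases hN : j < N
      · have : (Flip c i) ⟨j, hN⟩ = !(c ⟨j, hN⟩) := by simp [Flip, hji]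
        simp only [RS, hN, dif_pos, this, ih']
        cases c ⟨j, hN⟩ <;> simp <;> ring
      · simp [RS, hN, ih']

lemma RS_flip_ge {N : ℕ} (c : Fin N → Bool) (i j : ℕ) (h : i ≤ j) :
    RS (Flip c i) j = RS c j - 2 * RS c i := by
  induction j, h using Nat.le_induction with
  | base => rw [RS_flip_le c i i le_rfl]; ring
  | succ j hij ih =>
      by_cases hN : j < N
      · have hji : ¬ ((j : ℕ) < i) := by omega
        have : (Flip c i) ⟨j, hN⟩ = c ⟨j, hN⟩ := by simp [Flip, hji]
        simp only [RS, hN, dif_pos, this, ih]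
        ring
      · simp [RS, hN, ih]

theorem stmt6 (m q : ℕ) (hq : q ≤ m) (c : Fin (2*m) → Bool) (hc : wt c = m + q) (i : ℕ) :
    (i ≤ 2*m ∧ wt (Flip (Flip c i) i) = m + q ∧
      ∀ j ≤ 2*m, wt (Flip (Flip c i) j) = m + q → i ≤ j) ↔
    (i ≤ 2*m ∧ ∀ j < i, RS c i ≠ RS c j) := by
  have key : ∀ j, wt (Flip (Flip c i) j) = m + q ↔ RS c j = RS c i := by
    intro j
    have h1 : (wt (Flip (Flip c i) j) : ℤ) = (wt (Flip c i) : ℤ) - RS (Flip c i) j :=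
      wt_flip_int _ _
    have h2 : (wt (Flip c i) : ℤ) = (wt c : ℤ) - RS c i := wt_flip_int _ _
    have hcZ : (wt c : ℤ) = (m : ℤ) + q := by exact_mod_cast hc
    have hx : RS (Flip c i) j = -RS c j ∨ RS (Flip c i) j = RS c j - 2 * RS c i := by
      rcases le_total j i with hji | hij
      · exact Or.inl (RS_flip_le c i j hji)
      · exact Or.inr (RS_flip_ge c i j hij)
    constructor
    · intro hw
      have hwZ : (wt (Flip (Flip c i) j) : ℤ) = (m : ℤ) + q := by exact_mod_cast hw
      rcases hx with h | h <;> rw [h] at h1 <;> omega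
    · intro hr
      have : (wt (Flip (Flip c i) j) : ℤ) = (m : ℤ) + q := by
        rcases hx with h | h <;> rw [h] at h1 <;> omega
      exact_mod_cast this
  constructor
  · rintro ⟨him, -, hmin⟩
    refine ⟨him, fun j hji hne => ?_⟩
    have : wt (Flip (Flip c i) j) = m + q := (key j).mpr hne.symm
    have := hmin j (by omega) this
    omega
  · rintro ⟨him, hne⟩
    refine ⟨him, (key i).mpr rfl, fun j _ hw => ?_⟩
    by_contra hij
    push_neg at hij
    exact hne j hij ((key j).mp hw).symm
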